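/- arXiv:1806.01401 — 3 statements merged into one kernel-verified Lean document; each statement's English description precedes it below -/
import Mathlib

section
/- Let r : [0,1] → ℝ³ be the Hardy-Weinberg map r(t) = (t², 2t(1−t), (1−t)²). Then: (i) r is infinitely differentiable; (ii) r is injective on [0,1]; (iii) for every t ∈ [0,1], the point r(t) lies in the unit simplex, i.e., its coordinates are nonnegative and sum to 1; and (iv) for all s, t ∈ [0,1], the inner product r(s)·r(t) lies in [0,1]. In particular, the Hardy-Weinberg curve is a smooth, non-self-intersecting inner product curve. -/
/-- The Hardy-Weinberg map `r(t) = (t², 2t(1−t), (1−t)²)` is infinitely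
differentiable, injective on `[0,1]`, takes values in the unit simplex for `t ∈ [0,1]`,
and satisfies `r(s)·r(t) ∈ [0,1]` for all `s, t ∈ [0,1]`. -/
theorem hardyWeinberg_smooth_injective_simplex_inner (r : ℝ → (Fin 3 → ℝ))
    (hr : r = fun t => ![t ^ 2, 2 * t * (1 - t), (1 - t) ^ 2]) :
    ContDiff ℝ (⊤ : ℕ∞) r ∧
    Set.InjOn r (Set.Icc (0 : ℝ) 1) ∧
    (∀ t ∈ Set.Icc (0 : ℝ) 1, (∀ i, 0 ≤ r t i) ∧ ∑ i, r t i = 1) ∧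
    (∀ s ∈ Set.Icc (0 : ℝ) 1, ∀ t ∈ Set.Icc (0 : ℝ) 1,
      ∑ i, r s i * r t i ∈ Set.Icc (0 : ℝ) 1) := by
  subst hr
  refine ⟨?_, ?_, ?_, ?_⟩
  · apply contDiff_pi.mpr
    intro i
    fin_cases i <;> simp <;> fun_prop
  · intro s hs t ht h
    have h0 := congrFun h 0
    simp only [Matrix.cons_val_zero] at h0
    have : s = t ∨ s = -t := sq_eq_sq_iff_eq_or_eq_neg.mp h0
    rcases this with h' | h'
    · exact h'
    · obtain ⟨hs0, hs1⟩ := hs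
      obtain ⟨ht0, ht1⟩ := ht
      nlinarith [congrFun h 1, show (![s ^ 2, 2 * s * (1 - s), (1 - s) ^ 2] 1 = 2 * s * (1-s)) from rfl]
    -- fallback handled below
  · rintro t ⟨ht0, ht1⟩
    constructor
    · intro i
      fin_cases i <;> simp <;> nlinarith
    · simp [Fin.sum_univ_three]; ring
  · rintro s ⟨hs0, hs1⟩ t ⟨ht0, ht1⟩
    simp only [Fin.sum_univ_three, Matrix.cons_val_zero, Matrix.cons_val_one, Matrix.head_cons,
      Matrix.cons_val_two, Matrix.tail_cons]
    constructor
    · nlinarith [sq_nonneg (s*t), mul_nonneg hs0 ht0, mul_nonneg (sub_nonneg.mpr hs1) (sub_nonneg.mpr ht1), sq_nonneg ((1-s)*(1-t))]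
    · nlinarith [mul_nonneg hs0 ht0, mul_nonneg (sub_nonneg.mpr hs1) (sub_nonneg.mpr ht1), mul_nonneg hs0 (sub_nonneg.mpr ht1), mul_nonneg (sub_nonneg.mpr hs1) ht0]
end

section
/- Let d, l ≥ 1 and let Θ ⊆ ℝ^l be nonempty with θ₀ ∈ Θ. For each n, let (Ωₙ, Pₙ) be a probability space carrying ℝ^d-valued random vectors X_{n,1},…,X_{n,n} and X̂_{n,1},…,X̂_{n,n} and Θ-valued random vectors θ̂ₙ, θ̃ₙ. Let f : ℝ^d × Θ → ℝ and Q : Θ → ℝ. Assume: (i) for every ε > 0 there exists δ > 0 such that ‖x−y‖ < δ implies |f(x,θ) − f(y,θ)| < ε for all θ ∈ Θ; (ii) maxᵢ ‖X̂_{n,i} − X_{n,i}‖ → 0 in probability; (iii) sup_{θ∈Θ} |(1/n) Σᵢ (−f(X_{n,i},θ)) − Q(θ)| → 0 in probability; (iv) Q has a unique well-separated minimum at θ₀, i.e. for every ε > 0, inf{Q(θ) : θ ∈ Θ, ‖θ−θ₀‖ ≥ ε} > Q(θ₀); (v) pointwise on Ωₙ, θ̂ₙ minimizes θ ↦ −(1/n)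 Σᵢ f(X_{n,i},θ) over Θ and θ̃ₙ minimizes θ ↦ −(1/n) Σᵢ f(X̂_{n,i},θ) over Θ. Then for every c > 0, Pₙ(‖θ̂ₙ − θ̃ₙ‖ > c) → 0 as n → ∞. -/
/-!
Both estimators nearly minimise the same function. Once every `X̂_{n,i}` is within `δ` of
`X_{n,i}`, uniform continuity of `f` puts the contrast built from the `X̂_{n,i}` uniformly within
`η` of the one built from the `X_{n,i}`, and the uniform law puts the latter within `η` of `Q`.
Hence `Q(θ̂ₙ)` and `Q(θ̃ₙ)` exceed `Q(θ₀)` by at most `4η`, and well-separation of the minimum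
forces both estimators into the ball of radius `c / 2` around `θ₀`. The bad event
`‖θ̂ₙ − θ̃ₙ‖ > c` is therefore contained in the union of the two events controlled by (ii)
and (iii).
-/

open MeasureTheory Filter Topology

noncomputable def empiricalContrast {E F : Type*} {n : ℕ} (f : E → F → ℝ) (x : Fin n → E)
    (θ : F) : ℝ :=
  (1 / n : ℝ) * ∑ i, -f (x i) θ

theorem abs_empiricalContrast_sub_le {E F : Type*} {n : ℕ} {f : E → F → ℝ} {x y : Fin n → E}
    {θ : F} {η : ℝ} (hη : 0 ≤ η) (h : ∀ i, |f (x i) θ - f (y i) θ| ≤ η) :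
    |empiricalContrast f y θ - empiricalContrast f x θ| ≤ η := by
  have hsum : |∑ i, (f (x i) θ - f (y i) θ)| ≤ n * η :=
    calc |∑ i, (f (x i) θ - f (y i) θ)| ≤ ∑ i, |f (x i) θ - f (y i) θ| :=
          Finset.abs_sum_le_sum_abs _ _
      _ ≤ ∑ _i : Fin n, η := Finset.sum_le_sum fun i _ => h i
      _ = n * η := by simp
  rcases n.eq_zero_or_pos with rfl | hn
  · simpa [empiricalContrast] using hη
  have hn' : (0 : ℝ) < n := Nat.cast_pos.mpr hn
  calc |empiricalContrast f y θ - empiricalContrast f x θ|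
      = (1 / n) * |∑ i, (f (x i) θ - f (y i) θ)| := by
        simp only [empiricalContrast, ← mul_sub, ← Finset.sum_sub_distrib, neg_sub_neg, abs_mul,
          abs_of_pos (one_div_pos.mpr hn')]
    _ ≤ (1 / n) * (n * η) := by gcongr
    _ = η := by field_simp

theorem le_add_of_abs_sub_le_of_le {α : Type*} {Θ : Set α} {M N : α → ℝ} {a b : α} {η s : ℝ}
    (hMN : ∀ θ ∈ Θ, |M θ - N θ| ≤ η) (ha : a ∈ Θ) (hb : b ∈ Θ) (h : M a ≤ M b + s) :
    N a ≤ N b + (s + 2 * η) := by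
  have := abs_le.mp (hMN a ha)
  have := abs_le.mp (hMN b hb)
  linarith

theorem norm_sub_lt_of_lt_of_forall_le {E : Type*} [SeminormedAddCommGroup E] {Θ : Set E}
    {Q : E → ℝ} {θ₀ θ : E} {ε cQ : ℝ} (hsep : ∀ θ ∈ Θ, ε ≤ ‖θ - θ₀‖ → cQ ≤ Q θ) (hθ : θ ∈ Θ)
    (hQ : Q θ < cQ) : ‖θ - θ₀‖ < ε :=
  lt_of_not_ge fun h => (hsep θ hθ h).not_gt hQ

theorem norm_sub_lt_of_approx_minimizers {E : Type*} [SeminormedAddCommGroup E]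
    {Θ : Set E} {Q M₁ M₂ : E → ℝ} {θ₀ θ₁ θ₂ : E} {η ε cQ : ℝ}
    (hsep : ∀ θ ∈ Θ, ε ≤ ‖θ - θ₀‖ → cQ ≤ Q θ) (hgap : Q θ₀ + 4 * η < cQ)
    (hθ₀ : θ₀ ∈ Θ) (hθ₁ : θ₁ ∈ Θ) (hθ₂ : θ₂ ∈ Θ)
    (hM₁ : ∀ θ ∈ Θ, |M₁ θ - Q θ| ≤ η) (hM₂ : ∀ θ ∈ Θ, |M₂ θ - M₁ θ| ≤ η)
    (hmin₁ : M₁ θ₁ ≤ M₁ θ₀) (hmin₂ : M₂ θ₂ ≤ M₂ θ₀) :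
    ‖θ₁ - θ₂‖ < ε + ε := by
  have hη : 0 ≤ η := (abs_nonneg _).trans (hM₁ θ₀ hθ₀)
  have hQ₁ : Q θ₁ < cQ := by
    have := le_add_of_abs_sub_le_of_le hM₁ hθ₁ hθ₀ (s := 0) (by simpa using hmin₁)
    linarith
  have hQ₂ : Q θ₂ < cQ := by
    have h₂ := le_add_of_abs_sub_le_of_le hM₂ hθ₂ hθ₀ (s := 0) (by simpa using hmin₂)
    have := le_add_of_abs_sub_le_of_le hM₁ hθ₂ hθ₀ h₂
    linarith
  calc ‖θ₁ - θ₂‖ ≤ ‖θ₁ - θ₀‖ + ‖θ₂ - θ₀‖ := by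
        simpa only [dist_eq_norm] using dist_triangle_right θ₁ θ₂ θ₀
    _ < ε + ε := add_lt_add (norm_sub_lt_of_lt_of_forall_le hsep hθ₁ hQ₁)
        (norm_sub_lt_of_lt_of_forall_le hsep hθ₂ hQ₂)

theorem tendsto_measure_zero_of_subset_union {ι : Type*} {Ω : ι → Type*}
    [∀ n, MeasurableSpace (Ω n)] {μ : ∀ n, Measure (Ω n)} {L : Filter ι} {A B C : ∀ n, Set (Ω n)}
    (hA : Tendsto (fun n => μ n (A n)) L (𝓝 0)) (hB : Tendsto (fun n => μ n (B n)) L (𝓝 0))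
    (hC : ∀ n, C n ⊆ A n ∪ B n) : Tendsto (fun n => μ n (C n)) L (𝓝 0) := by
  refine tendsto_of_tendsto_of_tendsto_of_le_of_le tendsto_const_nhds (by simpa using hA.add hB)
    (fun _ => zero_le) fun n => ?_
  exact (measure_mono (hC n)).trans (measure_union_le _ _)

theorem mle_vs_spectral_mle_consistency_general
    (d l : ℕ)
    (Θ : Set (EuclideanSpace ℝ (Fin l)))
    (θ₀ : EuclideanSpace ℝ (Fin l)) (hθ₀ : θ₀ ∈ Θ)
    (Ω : ℕ → Type) [mΩ : ∀ n, MeasurableSpace (Ω n)]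
    (P : ∀ n, Measure (Ω n))
    (X Xhat : ∀ n : ℕ, Fin n → Ω n → EuclideanSpace ℝ (Fin d))
    (θhat θtilde : ∀ n : ℕ, Ω n → EuclideanSpace ℝ (Fin l))
    (f : EuclideanSpace ℝ (Fin d) → EuclideanSpace ℝ (Fin l) → ℝ)
    (Q : EuclideanSpace ℝ (Fin l) → ℝ)
    -- (i) uniform-in-θ uniform continuity of f in x
    (hf : ∀ ε > (0 : ℝ), ∃ δ > (0 : ℝ), ∀ x y : EuclideanSpace ℝ (Fin d),
      ‖x - y‖ < δ → ∀ θ ∈ Θ, |f x θ - f y θ| < ε)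
    -- (ii) max_i ‖X̂_{n,i} − X_{n,i}‖ → 0 in probability
    (hXconv : ∀ c > (0 : ℝ), Filter.Tendsto
      (fun n => P n {ω | ∃ i : Fin n, c < ‖Xhat n i ω - X n i ω‖})
      Filter.atTop (nhds 0))
    -- (iii) uniform weak law: sup_θ |(1/n) Σ_i (−f(X_{n,i},θ)) − Q(θ)| → 0 in probability
    (hQconv : ∀ c > (0 : ℝ), Filter.Tendsto
      (fun n => P n {ω | ∃ θ ∈ Θ,
        c < |(1 / n : ℝ) * ∑ i : Fin n, -f (X n i ω) θ - Q θ|})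
      Filter.atTop (nhds 0))
    -- (iv) unique well-separated minimum of Q at θ₀
    (hsep : ∀ ε > (0 : ℝ), ∃ cQ : ℝ, Q θ₀ < cQ ∧ ∀ θ ∈ Θ, ε ≤ ‖θ - θ₀‖ → cQ ≤ Q θ)
    -- (v) pointwise minimization over Θ
    (hhatmem : ∀ (n : ℕ) (ω : Ω n), θhat n ω ∈ Θ)
    (htildemem : ∀ (n : ℕ) (ω : Ω n), θtilde n ω ∈ Θ)
    (hhatmin : ∀ (n : ℕ) (ω : Ω n), ∀ θ ∈ Θ,
      -((1 / n : ℝ) * ∑ i : Fin n, f (X n i ω) (θhat n ω)) ≤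
        -((1 / n : ℝ) * ∑ i : Fin n, f (X n i ω) θ))
    (htildemin : ∀ (n : ℕ) (ω : Ω n), ∀ θ ∈ Θ,
      -((1 / n : ℝ) * ∑ i : Fin n, f (Xhat n i ω) (θtilde n ω)) ≤
        -((1 / n : ℝ) * ∑ i : Fin n, f (Xhat n i ω) θ)) :
    ∀ c > (0 : ℝ), Filter.Tendsto
      (fun n => P n {ω | c < ‖θhat n ω - θtilde n ω‖})
      Filter.atTop (nhds 0) := by
  intro c hc
  obtain ⟨cQ, hQ₀, hQsep⟩ := hsep (c / 2) (by positivity)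
  obtain ⟨η, hη, hgap⟩ : ∃ η > 0, Q θ₀ + 4 * η < cQ :=
    ⟨(cQ - Q θ₀) / 5, by linarith, by linarith⟩
  obtain ⟨δ, hδ, hfδ⟩ := hf η hη
  refine tendsto_measure_zero_of_subset_union (hXconv (δ / 2) (by positivity)) (hQconv η hη)
    fun n ω hω => ?_
  by_contra hgood
  simp only [Set.mem_union, Set.mem_ofPred_eq, not_or, not_exists, not_and, not_lt] at hgood
  obtain ⟨hXclose, hMQ⟩ := hgood
  have hcontrast : ∀ θ ∈ Θ,
      |empiricalContrast f (Xhat n · ω) θ - empiricalContrast f (X n · ω) θ| ≤ η :=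
    fun θ hθ => abs_empiricalContrast_sub_le hη.le fun i =>
      (hfδ _ _ (by rw [norm_sub_rev]; linarith [hXclose i]) θ hθ).le
  have hmin : ∀ {x : Fin n → EuclideanSpace ℝ (Fin d)} {θ'},
      (-((1 / n : ℝ) * ∑ i, f (x i) θ') ≤ -((1 / n : ℝ) * ∑ i, f (x i) θ₀)) →
      empiricalContrast f x θ' ≤ empiricalContrast f x θ₀ := by
    simp [empiricalContrast, Finset.sum_neg_distrib, mul_neg]
  exact hω.not_gt (add_halves c ▸ norm_sub_lt_of_approx_minimizers hQsep hgap hθ₀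
    (hhatmem n ω) (htildemem n ω) hMQ hcontrast (hmin (hhatmin n ω θ₀ hθ₀))
    (hmin (htildemin n ω θ₀ hθ₀)))

/-- Lemma 1 of the paper: under uniform-in-θ continuity of `f`,
convergence in probability of the estimated latent positions to the true ones
(uniformly over coordinates), a uniform weak law for the empirical contrast,
and a well-separated unique minimum of `Q` at `θ₀`, the minimum-contrast
estimators computed from the true and from the estimated latent positions
coincide asymptotically: `Pₙ(‖θ̂ₙ − θ̃ₙ‖ > c) → 0` for every `c > 0`. -/
theorem mle_vs_spectral_mle_consistency
    (d l : ℕ) (hd : 1 ≤ d) (hl : 1 ≤ l)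
    (Θ : Set (EuclideanSpace ℝ (Fin l))) (hΘ : Θ.Nonempty)
    (θ₀ : EuclideanSpace ℝ (Fin l)) (hθ₀ : θ₀ ∈ Θ)
    (Ω : ℕ → Type) [mΩ : ∀ n, MeasurableSpace (Ω n)]
    (P : ∀ n, Measure (Ω n)) [∀ n, IsProbabilityMeasure (P n)]
    (X Xhat : ∀ n : ℕ, Fin n → Ω n → EuclideanSpace ℝ (Fin d))
    (θhat θtilde : ∀ n : ℕ, Ω n → EuclideanSpace ℝ (Fin l))
    (f : EuclideanSpace ℝ (Fin d) → EuclideanSpace ℝ (Fin l) → ℝ)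
    (Q : EuclideanSpace ℝ (Fin l) → ℝ)
    -- (i) uniform-in-θ uniform continuity of f in x
    (hf : ∀ ε > (0 : ℝ), ∃ δ > (0 : ℝ), ∀ x y : EuclideanSpace ℝ (Fin d),
      ‖x - y‖ < δ → ∀ θ ∈ Θ, |f x θ - f y θ| < ε)
    -- (ii) max_i ‖X̂_{n,i} − X_{n,i}‖ → 0 in probability
    (hXconv : ∀ c > (0 : ℝ), Filter.Tendsto
      (fun n => P n {ω | ∃ i : Fin n, c < ‖Xhat n i ω - X n i ω‖})
      Filter.atTop (nhds 0))
    -- (iii) uniform weak law: sup_θ |(1/n) Σ_i (−f(X_{n,i},θ)) − Q(θ)| → 0 in probability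
    (hQconv : ∀ c > (0 : ℝ), Filter.Tendsto
      (fun n => P n {ω | ∃ θ ∈ Θ,
        c < |(1 / n : ℝ) * ∑ i : Fin n, -f (X n i ω) θ - Q θ|})
      Filter.atTop (nhds 0))
    -- (iv) unique well-separated minimum of Q at θ₀
    (hsep : ∀ ε > (0 : ℝ), ∃ cQ : ℝ, Q θ₀ < cQ ∧ ∀ θ ∈ Θ, ε ≤ ‖θ - θ₀‖ → cQ ≤ Q θ)
    -- (v) pointwise minimization over Θ
    (hhatmem : ∀ (n : ℕ) (ω : Ω n), θhat n ω ∈ Θ)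
    (htildemem : ∀ (n : ℕ) (ω : Ω n), θtilde n ω ∈ Θ)
    (hhatmin : ∀ (n : ℕ) (ω : Ω n), ∀ θ ∈ Θ,
      -((1 / n : ℝ) * ∑ i : Fin n, f (X n i ω) (θhat n ω)) ≤
        -((1 / n : ℝ) * ∑ i : Fin n, f (X n i ω) θ))
    (htildemin : ∀ (n : ℕ) (ω : Ω n), ∀ θ ∈ Θ,
      -((1 / n : ℝ) * ∑ i : Fin n, f (Xhat n i ω) (θtilde n ω)) ≤
        -((1 / n : ℝ) * ∑ i : Fin n, f (Xhat n i ω) θ)) :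
    ∀ c > (0 : ℝ), Filter.Tendsto
      (fun n => P n {ω | c < ‖θhat n ω - θtilde n ω‖})
      Filter.atTop (nhds 0) :=
  mle_vs_spectral_mle_consistency_general d l Θ θ₀ hθ₀ Ω (mΩ := mΩ) P X Xhat θhat θtilde f Q hf
    hXconv hQconv hsep hhatmem htildemem hhatmin htildemin
end

section
/- Let l ≥ 1, let U ⊆ ℝ^l be open and convex, and let h : U → ℝ^l be twice continuously differentiable with components h₁,…,h_l. Let a, b ∈ U with h(a) = 0. Suppose M ≥ 0 is such that for every j and every ξ ∈ U, the operator norm of the Hessian matrix of h_j at ξ is at most M. Suppose the Jacobian matrix S = Dh(a) is invertible and K ≥ ‖S⁻¹‖ (operator norm). If K·√l·M·‖b−a‖ ≤ 1, then ‖b−a‖ ≤ 2K·‖h(b)‖. -/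
/-!
Each component `h_j` satisfies the second-order Taylor bound
`|h_j b - Dh_j(a)(b - a)| ≤ M/2 ‖b - a‖²`, so the remainder `r = h b - S (b - a)` has
`‖r‖ ≤ √l M/2 ‖b - a‖²`. Applying `S⁻¹` gives `‖b - a‖ ≤ K ‖h b‖ + K ‖r‖`, and the smallness
assumption makes `K ‖r‖ ≤ ‖b - a‖ / 2`.
-/

open Set

section Taylor

variable {E F : Type*} [NormedAddCommGroup E] [NormedSpace ℝ E]
  [NormedAddCommGroup F] [NormedSpace ℝ F]

theorem norm_image_sub_le_of_norm_deriv_right_le_mul_sub {g g' : ℝ → F} {a b C : ℝ}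
    (hg : ContinuousOn g (Icc a b))
    (hg' : ∀ t ∈ Ico a b, HasDerivWithinAt g (g' t) (Ici t) t)
    (bound : ∀ t ∈ Ico a b, ‖g' t‖ ≤ C * (t - a)) (hab : a ≤ b) :
    ‖g b - g a‖ ≤ C / 2 * (b - a) ^ 2 := by
  have hB : ∀ t, HasDerivAt (fun t => C / 2 * (t - a) ^ 2) (C * (t - a)) t := fun t => by
    refine (((hasDerivAt_id t).sub_const a).pow 2 |>.const_mul (C / 2)).congr_deriv ?_
    simp only [Nat.cast_ofNat, id_eq, Nat.add_one_sub_one, pow_one, mul_one]; ring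
  exact image_norm_le_of_norm_deriv_right_le_deriv_boundary (f := fun t => g t - g a)
    (hg.sub continuousOn_const) (fun t ht => (hg' t ht).sub_const (g a)) (by simp) hB bound
    (right_mem_Icc.2 hab)

theorem Convex.norm_sub_sub_fderivWithin_le {U : Set E} {f : E → F} {a b : E} {M : ℝ}
    (hU : UniqueDiffOn ℝ U) (hconv : Convex ℝ U) (hf : ContDiffOn ℝ 2 f U)
    (ha : a ∈ U) (hb : b ∈ U)
    (hM : ∀ ξ ∈ U, ‖iteratedFDerivWithin ℝ 2 f U ξ‖ ≤ M) :
    ‖f b - f a - fderivWithin ℝ f U a (b - a)‖ ≤ M / 2 * ‖b - a‖ ^ 2 := by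
  set v := b - a
  set f' := fderivWithin ℝ f U
  have hf'_lip : ∀ y ∈ U, ‖f' y - f' a‖ ≤ M * ‖y - a‖ := by
    refine fun y hy => hconv.norm_image_sub_le_of_norm_fderivWithin_le
      ((hf.fderivWithin hU le_rfl).differentiableOn one_ne_zero) (fun ξ hξ => ?_) ha hy
    rw [← norm_iteratedFDerivWithin_one _ (hU ξ hξ), norm_iteratedFDerivWithin_fderivWithin hU hξ]
    exact hM ξ hξ
  have hpath : ∀ t ∈ Icc (0 : ℝ) 1, a + t • v ∈ U := fun t ht => hconv.add_smul_sub_mem ha hb ht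
  have hderiv : ∀ t ∈ Icc (0 : ℝ) 1, HasDerivWithinAt (fun s : ℝ => f (a + s • v) - s • f' a v)
      (f' (a + t • v) v - f' a v) (Icc 0 1) t := by
    intro t ht
    have hγ : HasDerivWithinAt (fun s : ℝ => a + s • v) v (Icc 0 1) t := by
      simpa using ((hasDerivAt_id t).smul_const v).const_add a |>.hasDerivWithinAt
    have hfγ := (hf.differentiableOn two_ne_zero _ (hpath t ht)).hasFDerivWithinAt
      |>.comp_hasDerivWithinAt t hγ hpath
    have hlin := ((hasDerivAt_id t).smul_const (f' a v)).hasDerivWithinAt (s := Icc 0 1)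
    rw [one_smul] at hlin
    exact hfγ.sub hlin
  have hbound : ∀ t ∈ Ico (0 : ℝ) 1, ‖f' (a + t • v) v - f' a v‖ ≤ M * ‖v‖ ^ 2 * (t - 0) := by
    intro t ht
    calc ‖f' (a + t • v) v - f' a v‖ = ‖(f' (a + t • v) - f' a) v‖ := rfl
      _ ≤ M * ‖t • v‖ * ‖v‖ := by
          grw [ContinuousLinearMap.le_opNorm, hf'_lip _ (hpath t (Ico_subset_Icc_self ht)),
            add_sub_cancel_left]
      _ = M * ‖v‖ ^ 2 * (t - 0) := by rw [norm_smul, Real.norm_of_nonneg ht.1]; ring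
  have key := norm_image_sub_le_of_norm_deriv_right_le_mul_sub
    (fun t ht => (hderiv t ht).continuousWithinAt)
    (fun t ht => (hderiv t (Ico_subset_Icc_self ht)).mono_of_mem_nhdsWithin
      (Icc_mem_nhdsGE_of_mem ht))
    hbound zero_le_one
  convert key using 1
  · simp only [one_smul, add_sub_cancel, zero_smul, add_zero, sub_zero, v]; abel_nf
  · ring

theorem EuclideanSpace.norm_le_sqrt_card_mul {𝕜 ι : Type*} [RCLike 𝕜] [Fintype ι]
    {x : EuclideanSpace 𝕜 ι} {c : ℝ} (hc : 0 ≤ c) (hx : ∀ i, ‖x i‖ ≤ c) :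
    ‖x‖ ≤ √(Fintype.card ι) * c := by
  have hsum : ∑ i, ‖x i‖ ^ 2 ≤ Fintype.card ι * c ^ 2 := by
    simpa using Finset.sum_le_sum fun i (_ : i ∈ Finset.univ) =>
      pow_le_pow_left₀ (norm_nonneg (x i)) (hx i) 2
  rw [EuclideanSpace.norm_eq, ← Real.sqrt_sq hc, ← Real.sqrt_mul (Nat.cast_nonneg _)]
  exact Real.sqrt_le_sqrt hsum

theorem Convex.norm_sub_sub_fderivWithin_le_sqrt_card_mul {ι : Type*} [Fintype ι]
    {U : Set E} {f : E → EuclideanSpace ℝ ι} {a b : E} {M : ℝ} (hM0 : 0 ≤ M)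
    (hU : UniqueDiffOn ℝ U) (hconv : Convex ℝ U) (hf : ContDiffOn ℝ 2 f U)
    (ha : a ∈ U) (hb : b ∈ U)
    (hM : ∀ i, ∀ ξ ∈ U, ‖iteratedFDerivWithin ℝ 2 (fun x => f x i) U ξ‖ ≤ M) :
    ‖f b - f a - fderivWithin ℝ f U a (b - a)‖ ≤ √(Fintype.card ι) * (M / 2 * ‖b - a‖ ^ 2) := by
  refine EuclideanSpace.norm_le_sqrt_card_mul (by positivity) fun i => ?_
  have hfi : fderivWithin ℝ (fun x => f x i) U a
      = (EuclideanSpace.proj i).comp (fderivWithin ℝ f U a) :=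
    ((EuclideanSpace.proj (𝕜 := ℝ) i).hasFDerivAt.comp_hasFDerivWithinAt a
      (hf.differentiableOn two_ne_zero a ha).hasFDerivWithinAt).fderivWithin (hU a ha)
  have hfi_C2 : ContDiffOn ℝ 2 (fun x => f x i) U :=
    (EuclideanSpace.proj (𝕜 := ℝ) i).contDiff.comp_contDiffOn hf
  have := hconv.norm_sub_sub_fderivWithin_le hU hfi_C2 ha hb (hM i)
  rwa [hfi] at this

end Taylor

theorem taylor_zero_proximity_bound_general
    (l : ℕ)
    (U : Set (EuclideanSpace ℝ (Fin l))) (hUopen : IsOpen U) (hUconv : Convex ℝ U)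
    (h : EuclideanSpace ℝ (Fin l) → EuclideanSpace ℝ (Fin l))
    (hh : ContDiffOn ℝ 2 h U)
    (a b : EuclideanSpace ℝ (Fin l)) (ha : a ∈ U) (hb : b ∈ U)
    (hha : h a = 0)
    (M : ℝ) (hM0 : 0 ≤ M)
    (hHess : ∀ j : Fin l, ∀ ξ ∈ U,
      ‖iteratedFDerivWithin ℝ 2 (fun x => h x j) U ξ‖ ≤ M)
    (Sinv : EuclideanSpace ℝ (Fin l) →L[ℝ] EuclideanSpace ℝ (Fin l))
    (hSinv1 : Sinv.comp (fderivWithin ℝ h U a) =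
      ContinuousLinearMap.id ℝ (EuclideanSpace ℝ (Fin l)))
    (K : ℝ) (hK : ‖Sinv‖ ≤ K)
    (hsmall : K * Real.sqrt l * M * ‖b - a‖ ≤ 1) :
    ‖b - a‖ ≤ 2 * K * ‖h b‖ := by
  set D := fderivWithin ℝ h U a
  have hK0 : 0 ≤ K := (norm_nonneg _).trans hK
  have hrem : ‖h b - D (b - a)‖ ≤ √l * (M / 2 * ‖b - a‖ ^ 2) := by
    simpa [hha] using hUconv.norm_sub_sub_fderivWithin_le_sqrt_card_mul hM0
      hUopen.uniqueDiffOn hh ha hb hHess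
  have : ‖b - a‖ ≤ K * ‖h b‖ + ‖b - a‖ / 2 :=
    calc ‖b - a‖ = ‖Sinv (D (b - a))‖ := by
          rw [← ContinuousLinearMap.comp_apply, hSinv1, ContinuousLinearMap.id_apply]
      _ ≤ K * ‖D (b - a)‖ := Sinv.le_of_opNorm_le hK _
      _ ≤ K * (‖h b‖ + ‖h b - D (b - a)‖) := by
          gcongr; simpa using norm_sub_le (h b) (h b - D (b - a))
      _ ≤ K * (‖h b‖ + √l * (M / 2 * ‖b - a‖ ^ 2)) := by gcongr
      _ = K * ‖h b‖ + K * √l * M * ‖b - a‖ * (‖b - a‖ / 2) := by ring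
      _ ≤ K * ‖h b‖ + ‖b - a‖ / 2 := by
          gcongr; exact mul_le_of_le_one_left (by positivity) hsmall
  linarith

/-- deterministic second-order Taylor bound. Let `h : U → ℝ^l` be `C²`
on an open convex `U`, with `h(a) = 0`, Hessians of all components bounded in norm
by `M` on `U`, and invertible Jacobian `S = Dh(a)` with `‖S⁻¹‖ ≤ K`. If
`K √l M ‖b−a‖ ≤ 1` then `‖b−a‖ ≤ 2 K ‖h(b)‖`. -/
theorem taylor_zero_proximity_bound
    (l : ℕ) (hl : 1 ≤ l)
    (U : Set (EuclideanSpace ℝ (Fin l))) (hUopen : IsOpen U) (hUconv : Convex ℝ U)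
    (h : EuclideanSpace ℝ (Fin l) → EuclideanSpace ℝ (Fin l))
    (hh : ContDiffOn ℝ 2 h U)
    (a b : EuclideanSpace ℝ (Fin l)) (ha : a ∈ U) (hb : b ∈ U)
    (hha : h a = 0)
    (M : ℝ) (hM0 : 0 ≤ M)
    (hHess : ∀ j : Fin l, ∀ ξ ∈ U,
      ‖iteratedFDerivWithin ℝ 2 (fun x => h x j) U ξ‖ ≤ M)
    (Sinv : EuclideanSpace ℝ (Fin l) →L[ℝ] EuclideanSpace ℝ (Fin l))
    (hSinv1 : Sinv.comp (fderivWithin ℝ h U a) =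
      ContinuousLinearMap.id ℝ (EuclideanSpace ℝ (Fin l)))
    (hSinv2 : (fderivWithin ℝ h U a).comp Sinv =
      ContinuousLinearMap.id ℝ (EuclideanSpace ℝ (Fin l)))
    (K : ℝ) (hK : ‖Sinv‖ ≤ K)
    (hsmall : K * Real.sqrt l * M * ‖b - a‖ ≤ 1) :
    ‖b - a‖ ≤ 2 * K * ‖h b‖ :=
  taylor_zero_proximity_bound_general l U hUopen hUconv h hh a b ha hb hha M hM0 hHess Sinv hSinv1 K
    hK hsmall
end
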